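/- arXiv:2012.12744 — 2 statements merged into one kernel-verified Lean document; each statement's English description precedes it below -/
import Mathlib

section
/- Let k be a field and let N be a finitely generated k[x]-module annihilated by some power of x. Let v be a nonzero element of N with xv = 0, let m be the largest integer such that v ∈ x^{m-1}N, and let v' ∈ N satisfy v = x^{m-1}v'. Then the cyclic k[x]-submodule generated by v' is a direct summand of N and is isomorphic to k[x]/(x^m). -/
set_option maxHeartbeats 1000000 in
open Polynomial in
/-- Lemma 2.1: if `v ≠ 0` is in the socle of a finitely generated nilpotent `k[x]`-module `N`,
`m` is the largest integer with `v ∈ x^{m-1}N`, and `v = x^{m-1}v'`, then the cyclic submodule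
generated by `v'` is a direct summand of `N` isomorphic to `k[x]/(x^m)`. -/
theorem socle_generator_gives_direct_summand
    (k : Type) [Field k] (N : Type) [AddCommGroup N] [Module (Polynomial k) N]
    (hfg : Module.Finite (Polynomial k) N)
    (hnil : ∃ n : ℕ, ∀ y : N, (X : Polynomial k) ^ n • y = 0)
    (v : N) (hv : v ≠ 0) (hsoc : (X : Polynomial k) • v = 0)
    (m : ℕ) (hm : 1 ≤ m)
    (hdvd : ∃ z : N, v = (X : Polynomial k) ^ (m - 1) • z)
    (hmax : ∀ j : ℕ, (∃ z : N, v = (X : Polynomial k) ^ j • z) → j ≤ m - 1)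
    (v' : N) (hv' : v = (X : Polynomial k) ^ (m - 1) • v') :
    (∃ q : Submodule (Polynomial k) N,
        IsCompl (Submodule.span (Polynomial k) {v'}) q) ∧
      Nonempty ((↥(Submodule.span (Polynomial k) ({v'} : Set N))) ≃ₗ[Polynomial k]
        (Polynomial k ⧸ Ideal.span ({(X : Polynomial k) ^ m} : Set (Polynomial k)))) := by
  classical
  obtain ⟨n, hn⟩ := hnil
  have htor : Module.IsTorsion (Polynomial k) N := fun y =>
    ⟨⟨(X : Polynomial k) ^ n,
      mem_nonZeroDivisors_of_ne_zero (pow_ne_zero _ Polynomial.X_ne_zero)⟩, hn y⟩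
  obtain ⟨ι, hfin, p, hp, e, ⟨g⟩⟩ := Module.equiv_directSum_of_isTorsion htor
  haveI := hfin
  have hgw : g v = (X : Polynomial k) ^ (m - 1) • g v' := by
    rw [hv', map_smul]
  have hXgv : (X : Polynomial k) • g v = 0 := by
    rw [← map_smul, hsoc, map_zero]
  have hXmv' : (X : Polynomial k) ^ m • v' = 0 := by
    have hXX : (X : Polynomial k) ^ m = X * X ^ (m - 1) := by
      rw [← pow_succ']
      congr 1
      omega
    rw [hXX, mul_smul, ← hv', hsoc]
  -- find a coordinate where the component of `v` is nonzero and that of `v'` is not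
  -- divisible by `X`
  have hkey : ∃ i₀, g v i₀ ≠ 0 ∧ ¬ ∃ y, g v' i₀ = (X : Polynomial k) • y := by
    by_contra hA
    push_neg at hA
    have hz : ∀ i, ∃ z, g v i = (X : Polynomial k) ^ m • z := by
      intro i
      by_cases hi : g v i = 0
      · exact ⟨0, by rw [hi, smul_zero]⟩
      · obtain ⟨y, hy⟩ := hA i hi
        refine ⟨y, ?_⟩
        have hcomp : g v i = (X : Polynomial k) ^ (m - 1) • g v' i := by
          rw [hgw]
          exact DFinsupp.smul_apply _ _ _
        rw [hcomp, hy, smul_smul, ← pow_succ, Nat.sub_add_cancel hm]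
    choose z hz using hz
    set S := ∑ i, DirectSum.of (fun i => Polynomial k ⧸
        Submodule.span (Polynomial k) {p i ^ e i}) i (z i) with hS
    have hsum : g v = (X : Polynomial k) ^ m • S := by
      conv_lhs => rw [← DirectSum.sum_univ_of (g v)]
      rw [hS, Finset.smul_sum]
      refine Finset.sum_congr rfl fun i _ => ?_
      rw [hz i, DirectSum.of_smul]
    have hvv : v = (X : Polynomial k) ^ m • g.symm S := by
      apply g.injective
      rw [map_smul, LinearEquiv.apply_symm_apply, hsum]
    have := hmax m ⟨g.symm S, hvv⟩
    omega
  obtain ⟨i₀, hz0, hu⟩ := hkey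
  set q0 : Polynomial k := p i₀ with hq0
  set E : ℕ := e i₀ with hEdef
  set I : Submodule (Polynomial k) (Polynomial k) :=
    Submodule.span (Polynomial k) {q0 ^ E} with hIdef
  obtain ⟨s, hs⟩ := Submodule.Quotient.mk_surjective I (g v' i₀)
  have hmk : ∀ (c a : Polynomial k),
      c • (Submodule.Quotient.mk (p := I) a) = Submodule.Quotient.mk (p := I) (c * a) := by
    intro c a
    rw [← smul_eq_mul, Submodule.Quotient.mk_smul]
  have hzero : ∀ a : Polynomial k,
      (Submodule.Quotient.mk (p := I) a) = 0 ↔ q0 ^ E ∣ a := by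
    intro a
    rw [Submodule.Quotient.mk_eq_zero, hIdef]
    exact Ideal.mem_span_singleton
  have hcomp0 : g v i₀ = (X : Polynomial k) ^ (m - 1) • g v' i₀ := by
    rw [hgw]
    exact DFinsupp.smul_apply _ _ _
  have hgv0 : g v i₀ = Submodule.Quotient.mk ((X : Polynomial k) ^ (m - 1) * s) := by
    rw [hcomp0, ← hs, hmk]
  have hXnz : ¬ q0 ^ E ∣ (X : Polynomial k) ^ (m - 1) * s := fun h =>
    hz0 (by rw [hgv0]; exact (hzero _).mpr h)
  have hXz0 : q0 ^ E ∣ (X : Polynomial k) * ((X : Polynomial k) ^ (m - 1) * s) := by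
    have h1 : (X : Polynomial k) • g v i₀ = 0 := by
      have h2 := congrArg (fun t => t i₀) hXgv
      exact (DFinsupp.smul_apply _ _ _).symm.trans h2
    rw [hgv0, hmk] at h1
    exact (hzero _).mp h1
  have hqprime : Prime q0 := (hp i₀).prime
  have hqX : q0 ∣ (X : Polynomial k) := by
    by_contra hq
    exact hXnz (hqprime.pow_dvd_of_dvd_mul_left E hq hXz0)
  have hassoc : Associated (q0 ^ E) ((X : Polynomial k) ^ E) :=
    ((hp i₀).associated_of_dvd Polynomial.irreducible_X hqX).pow_pow
  have hdvd_iff : ∀ a : Polynomial k, q0 ^ E ∣ a ↔ (X : Polynomial k) ^ E ∣ a :=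
    fun a => hassoc.dvd_iff_dvd_left
  have hXs : ¬ (X : Polynomial k) ∣ s := by
    rintro ⟨t, rfl⟩
    exact hu ⟨Submodule.Quotient.mk t, by rw [← hs, hmk]⟩
  have hmE : m ≤ E := by
    by_contra hlt
    push_neg at hlt
    apply hXnz
    rw [hdvd_iff]
    exact dvd_mul_of_dvd_left (pow_dvd_pow _ (by omega)) s
  have hann : ∀ c : Polynomial k, c • g v' i₀ = 0 → (X : Polynomial k) ^ m ∣ c := by
    intro c hc
    rw [← hs, hmk, hzero, hdvd_iff] at hc
    have hXE : (X : Polynomial k) ^ E ∣ c :=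
      Polynomial.prime_X.pow_dvd_of_dvd_mul_right E hXs hc
    exact dvd_trans (pow_dvd_pow _ hmE) hXE
  have hannv' : ∀ c : Polynomial k, c • v' = 0 ↔ (X : Polynomial k) ^ m ∣ c := by
    intro c
    constructor
    · intro hc
      apply hann
      have h3 : g (c • v') = 0 := by rw [hc, map_zero]
      rw [map_smul] at h3
      have h4 := congrArg (fun t => t i₀) h3
      exact (DFinsupp.smul_apply _ _ _).symm.trans h4
    · rintro ⟨d, rfl⟩
      rw [mul_comm, mul_smul, hXmv', smul_zero]
  have hcop : IsCoprime ((X : Polynomial k) ^ E) s :=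
    ((Polynomial.irreducible_X.coprime_iff_not_dvd).mpr hXs).pow_left
  have hsurj : ∀ t : (Polynomial k) ⧸ I, ∃ c : Polynomial k, c • g v' i₀ = t := by
    intro t
    obtain ⟨a, rfl⟩ := Submodule.Quotient.mk_surjective I t
    obtain ⟨c1, c2, h12⟩ := hcop
    refine ⟨a * c2, ?_⟩
    rw [← hs, hmk, Submodule.Quotient.eq]
    exact Ideal.mem_span_singleton.mpr
      ((hdvd_iff _).mpr ⟨-(a * c1), by linear_combination a * h12⟩)
  let f : N →ₗ[Polynomial k] (Polynomial k ⧸ I) :=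
    (DirectSum.component (Polynomial k) ι (fun i => Polynomial k ⧸
      Submodule.span (Polynomial k) {p i ^ e i}) i₀).comp (g : N →ₗ[Polynomial k] _)
  have hfapp : ∀ x : N, f x = g x i₀ := fun x => rfl
  constructor
  · refine ⟨LinearMap.ker f, ?_⟩
    rw [isCompl_iff]
    constructor
    · rw [Submodule.disjoint_def]
      intro x hx hker
      obtain ⟨c, rfl⟩ := Submodule.mem_span_singleton.mp hx
      have h5 : c • g v' i₀ = 0 := by
        have h6 : f (c • v') = 0 := hker
        rw [map_smul, hfapp] at h6
        exact h6
      exact (hannv' c).mpr (hann c h5)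
    · rw [codisjoint_iff, eq_top_iff]
      intro y _
      obtain ⟨c, hc⟩ := hsurj (f y)
      refine Submodule.mem_sup.mpr ⟨c • v', Submodule.mem_span_singleton.mpr ⟨c, rfl⟩,
        y - c • v', ?_, by abel⟩
      rw [LinearMap.mem_ker, map_sub, map_smul, hfapp v', hc]
      exact sub_self _
  · have hker : LinearMap.ker (LinearMap.toSpanSingleton (Polynomial k) N v')
        = Ideal.span {(X : Polynomial k) ^ m} := by
      ext c
      rw [LinearMap.mem_ker, LinearMap.toSpanSingleton_apply, Ideal.mem_span_singleton]
      exact hannv' c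
    exact ⟨((LinearEquiv.ofEq _ _
        (LinearMap.span_singleton_eq_range (Polynomial k) N v')).trans
      (LinearMap.toSpanSingleton (Polynomial k) N v').quotKerEquivRange.symm).trans
      (Submodule.quotEquivOfEq _ _ hker)⟩
end

section
/- Let n ≥ 2 and let k be a finite field with q elements. For every partition λ, the number of k[x]-submodules U of N_λ(k) with U ≅ N_{(1^{n-1})}(k) and N_λ(k)/U ≅ N_{(1)}(k) equals (q^n − 1)/(q − 1) if λ = (1^n), equals 1 if λ = (2,1^{n-2}), and equals 0 otherwise. -/
noncomputable section

namespace BirkhoffMod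

/-- The Hall number `F^Y_{X,Z}`: the number of submodules `U ⊆ Y` with `U ≅ X` and
`Y/U ≅ Z`. -/
def hallPair (A : Type) [Ring A] (X Z Y : Type)
    [AddCommGroup X] [Module A X] [AddCommGroup Z] [Module A Z]
    [AddCommGroup Y] [Module A Y] : ℕ :=
  Nat.card {U : Submodule A Y //
    Nonempty (U ≃ₗ[A] X) ∧ Nonempty ((Y ⧸ U) ≃ₗ[A] Z)}

/-- The Hall number `F^Y_{X₁,X₂,X₃}`: the number of chains `0 ⊆ U₁ ⊆ U₂ ⊆ Y` with
`U₁ ≅ X₁`, `U₂/U₁ ≅ X₂` and `Y/U₂ ≅ X₃`. -/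
def hallTriple (A : Type) [Ring A] (X₁ X₂ X₃ Y : Type)
    [AddCommGroup X₁] [Module A X₁] [AddCommGroup X₂] [Module A X₂]
    [AddCommGroup X₃] [Module A X₃] [AddCommGroup Y] [Module A Y] : ℕ :=
  Nat.card {p : Submodule A Y × Submodule A Y //
    p.1 ≤ p.2 ∧ Nonempty (p.1 ≃ₗ[A] X₁) ∧
    Nonempty ((↥p.2 ⧸ (p.1.comap p.2.subtype)) ≃ₗ[A] X₂) ∧
    Nonempty ((Y ⧸ p.2) ≃ₗ[A] X₃)}

/-- The Hall number `F^Y_{X_1,…,X_t}`: the number of chains of submodules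
`0 = U_0 ⊆ U_1 ⊆ … ⊆ U_t = Y` with `U_i/U_{i-1} ≅ X_i` for all `i`. -/
def hallChain (A : Type) [Ring A] {t : ℕ} (X : Fin t → Type)
    [∀ i, AddCommGroup (X i)] [∀ i, Module A (X i)]
    (Y : Type) [AddCommGroup Y] [Module A Y] : ℕ :=
  Nat.card {U : Fin (t + 1) → Submodule A Y //
    Monotone U ∧ U 0 = ⊥ ∧ U (Fin.last t) = ⊤ ∧
    ∀ i : Fin t,
      Nonempty ((↥(U i.succ) ⧸ ((U i.castSucc).comap (U i.succ).subtype)) ≃ₗ[A] X i)}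

/-- The number of injective `A`-module homomorphisms `M → N`, i.e. `|Mon_A(M,N)|`. -/
def monCount (A : Type) [Ring A] (M N : Type)
    [AddCommGroup M] [Module A M] [AddCommGroup N] [Module A N] : ℕ :=
  Nat.card {f : M →ₗ[A] N // Function.Injective f}

section Nilpotent

variable (k : Type) [Field k]

/-- The shift operator on `Fin m → k`, modelling multiplication by `x` on
`k[x]/(x^m)` in the basis `1, x, …, x^{m-1}`. -/
def shiftL (m : ℕ) : (Fin m → k) →ₗ[k] (Fin m → k) where
  toFun v i :=
    if h : 0 < (i : ℕ) then v ⟨(i : ℕ) - 1, lt_of_le_of_lt (Nat.sub_le _ _) i.isLt⟩ else 0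
  map_add' u v := by
    funext i
    by_cases h : 0 < (i : ℕ) <;> simp [h]
  map_smul' c v := by
    funext i
    by_cases h : 0 < (i : ℕ) <;> simp [h]

/-- Componentwise linear map between pi types. -/
def piMapL {ι : Type} {M N : ι → Type} [∀ i, AddCommGroup (M i)] [∀ i, Module k (M i)]
    [∀ i, AddCommGroup (N i)] [∀ i, Module k (N i)] (g : ∀ i, M i →ₗ[k] N i) :
    (∀ i, M i) →ₗ[k] (∀ i, N i) :=
  LinearMap.pi (fun i => (g i).comp (LinearMap.proj i))

/-- The nilpotent `k[x]`-module `N_λ(k) = ⊕ᵢ k[x]/(x^{λᵢ})` attached to a partition given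
as a list `l = (λ₁, …, λ_s)`; `x` acts by the shift on each summand. -/
def NRep (l : List ℕ) : Type :=
  Module.AEval' (piMapL k (fun i : Fin l.length => shiftL k (l.get i)))

instance (l : List ℕ) : AddCommGroup (NRep k l) := by
  unfold NRep; infer_instance

instance (l : List ℕ) : Module (Polynomial k) (NRep k l) := by
  unfold NRep; infer_instance

end Nilpotent

end BirkhoffMod


-- ===== BEGIN auxiliary development =====

-- ===== auxiliary lemmas =====
open Polynomial in
theorem BM.smul_eq_coeff_zero_smul {k : Type} [Field k] {W : Type} [AddCommGroup W]
    [Module (Polynomial k) W] [Module k W] [IsScalarTower k (Polynomial k) W]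
    (h0 : ∀ w : W, (X : Polynomial k) • w = 0) (p : Polynomial k) (w : W) :
    p • w = p.coeff 0 • w := by
  induction p using Polynomial.induction_on' with
  | add p q hp hq => rw [add_smul, hp, hq, coeff_add, add_smul]
  | monomial n a =>
    rcases n with _ | n
    · rw [coeff_monomial, if_pos rfl,
        show ((monomial 0) a : Polynomial k) = C a from by simp,
        show (C a : Polynomial k) • w = a • w from by
          rw [← algebraMap_smul (Polynomial k) a w]; rfl]
    · rw [coeff_monomial, if_neg (by omega),
        show ((monomial (n+1)) a : Polynomial k) = C a * X^(n+1) from by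
          rw [C_mul_X_pow_eq_monomial],
        mul_smul, pow_succ, mul_smul, h0, smul_zero, smul_zero, zero_smul]

open Polynomial in
noncomputable def BM.polyEquivOfXZero {k : Type} [Field k] {W₁ W₂ : Type}
    [AddCommGroup W₁] [Module (Polynomial k) W₁]
    [Module k W₁] [IsScalarTower k (Polynomial k) W₁]
    [AddCommGroup W₂] [Module (Polynomial k) W₂] [Module k W₂]
    [IsScalarTower k (Polynomial k) W₂]
    (h1 : ∀ w : W₁, (X : Polynomial k) • w = 0) (h2 : ∀ w : W₂, (X : Polynomial k) • w = 0)
    (e : W₁ ≃ₗ[k] W₂) : W₁ ≃ₗ[Polynomial k] W₂ where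
  toFun := e
  invFun := e.symm
  left_inv := e.left_inv
  right_inv := e.right_inv
  map_add' := e.map_add
  map_smul' p w := by
    simp only [RingHom.id_apply]
    rw [BM.smul_eq_coeff_zero_smul h1, BM.smul_eq_coeff_zero_smul h2, map_smul]

theorem BM.surj_of_ne_zero {k : Type} [Field k] {V : Type} [AddCommGroup V] [Module k V]
    (f : V →ₗ[k] k) (hf : f ≠ 0) : Function.Surjective f := by
  obtain ⟨v, hv⟩ : ∃ v, f v ≠ 0 := by
    by_contra hc
    push_neg at hc
    exact hf (LinearMap.ext fun x => by rw [hc x]; rfl)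
  intro c
  exact ⟨(c / f v) • v, by rw [map_smul, smul_eq_mul, div_mul_cancel₀ _ hv]⟩

theorem BM.functional_facts {k : Type} [Field k] {V : Type} [AddCommGroup V] [Module k V]
    [FiniteDimensional k V] (f : V →ₗ[k] k) (hf : f ≠ 0) :
    Module.finrank k (LinearMap.ker f) = Module.finrank k V - 1 ∧
      Module.finrank k (V ⧸ LinearMap.ker f) = 1 := by
  have e : (V ⧸ LinearMap.ker f) ≃ₗ[k] k :=
    f.quotKerEquivOfSurjective (BM.surj_of_ne_zero f hf)
  have h2 : Module.finrank k (V ⧸ LinearMap.ker f) = 1 := by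
    rw [e.finrank_eq, Module.finrank_self]
  refine ⟨?_, h2⟩
  have := Submodule.finrank_quotient_add_finrank (LinearMap.ker f)
  omega

theorem BM.exists_smul_of_ker_le {k : Type} [Field k] {V : Type} [AddCommGroup V] [Module k V]
    (f g : V →ₗ[k] k) (hg : g ≠ 0)
    (h : LinearMap.ker g ≤ LinearMap.ker f) : ∃ c : k, f = c • g := by
  obtain ⟨v, hv⟩ : ∃ v, g v ≠ 0 := by
    by_contra hc
    push_neg at hc
    exact hg (LinearMap.ext fun x => by rw [hc x]; rfl)
  refine ⟨f v / g v, LinearMap.ext fun x => ?_⟩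
  have hy : g (x - (g x / g v) • v) = 0 := by
    simp [map_sub, map_smul, div_mul_cancel₀ _ hv, smul_eq_mul]
  have hyf : f (x - (g x / g v) • v) = 0 := h (by simpa [LinearMap.mem_ker] using hy)
  have hx : f x = (g x / g v) * f v := by
    rw [map_sub, map_smul, sub_eq_zero] at hyf
    rw [hyf]; simp [smul_eq_mul]
  rw [hx]
  simp only [LinearMap.smul_apply, smul_eq_mul]
  field_simp

theorem BM.ker_unit_smul {k : Type} [Field k] {V : Type} [AddCommGroup V] [Module k V]
    (f : V →ₗ[k] k) (c : k) (hc : c ≠ 0) :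
    LinearMap.ker (c • f) = LinearMap.ker f := by
  ext x
  simp [LinearMap.mem_ker, smul_eq_mul, hc]

theorem BM.geom_nat (q : ℕ) (hq : 1 ≤ q) (n : ℕ) :
    (∑ i ∈ Finset.range n, q ^ i) * (q - 1) = q ^ n - 1 := by
  induction n with
  | zero => simp
  | succ n ih =>
    rw [Finset.sum_range_succ, add_mul, ih]
    have h1 : 1 ≤ q ^ n := Nat.one_le_pow _ _ hq
    have h2 : q ^ n * (q - 1) = q ^ (n+1) - q ^ n := by
      rw [Nat.mul_sub, mul_one, pow_succ]
    have h3 : q ^ n ≤ q ^ (n+1) := Nat.pow_le_pow_right hq (by omega)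
    omega

theorem BM.card_hyperplanes {k : Type} [Field k] {V : Type} [AddCommGroup V] [Module k V]
    [FiniteDimensional k V] [Fintype k] {n : ℕ}
    (hn : Module.finrank k V = n) (h1 : 1 ≤ n) :
    Nat.card {p : Submodule k V //
        Module.finrank k ↥p = n - 1 ∧ Module.finrank k (V ⧸ p) = 1} =
      ∑ i ∈ Finset.range n, Fintype.card k ^ i := by
  classical
  set q := Fintype.card k with hq
  have hq2 : 2 ≤ q := Fintype.one_lt_card
  set T := {p : Submodule k V //
      Module.finrank k ↥p = n - 1 ∧ Module.finrank k (V ⧸ p) = 1} with hT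
  have hex : ∀ p : T, ∃ f : V →ₗ[k] k, f ≠ 0 ∧ LinearMap.ker f = p.1 := by
    rintro ⟨p, hp1, hp2⟩
    have e : (V ⧸ p) ≃ₗ[k] k := LinearEquiv.ofFinrankEq _ _ (by rw [hp2, Module.finrank_self])
    refine ⟨(e : (V ⧸ p) →ₗ[k] k).comp (p.mkQ), ?_, ?_⟩
    · intro hz
      have h3 := congrArg (fun g : V →ₗ[k] k => g (p.mkQ_surjective (e.symm 1)).choose) hz
      simp only [LinearMap.comp_apply, LinearMap.zero_apply] at h3
      rw [(p.mkQ_surjective (e.symm 1)).choose_spec] at h3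
      simp at h3
    · ext x
      simp [LinearMap.mem_ker, Submodule.Quotient.mk_eq_zero]
  choose F hF0 hFker using hex
  have hcard : ∀ f : V →ₗ[k] k, f ≠ 0 →
      (Module.finrank k ↥(LinearMap.ker f) = n - 1 ∧
        Module.finrank k (V ⧸ LinearMap.ker f) = 1) := by
    intro f hf
    have := BM.functional_facts f hf
    rw [hn] at this
    exact this
  have key : ∀ f : {f : V →ₗ[k] k // f ≠ 0},
      ∃ c : kˣ, f.1 = (c : k) • F ⟨LinearMap.ker f.1, hcard f.1 f.2⟩ := by
    rintro ⟨f, hf⟩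
    set p : T := ⟨LinearMap.ker f, hcard f hf⟩
    obtain ⟨c, hc⟩ := BM.exists_smul_of_ker_le f (F p) (hF0 p) (le_of_eq (hFker p))
    have hcne : c ≠ 0 := by
      rintro rfl
      rw [zero_smul] at hc
      exact hf hc
    exact ⟨Units.mk0 c hcne, hc⟩
  have e : T × kˣ ≃ {f : V →ₗ[k] k // f ≠ 0} := by
    refine ⟨fun pc => ⟨(pc.2 : k) • F pc.1, ?_⟩,
      fun f => (⟨LinearMap.ker f.1, hcard f.1 f.2⟩, Classical.choose (key f)),
      ?_, ?_⟩
    · intro hz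
      apply hF0 pc.1
      have := congrArg (fun g => ((pc.2⁻¹ : kˣ) : k) • g) hz
      simpa [smul_smul] using this
    · rintro ⟨p, c⟩
      have hne : ((c : k) • F p) ≠ 0 := by
        intro hz
        apply hF0 p
        have := congrArg (fun g => ((c⁻¹ : kˣ) : k) • g) hz
        simpa [smul_smul] using this
      have hker : LinearMap.ker ((c : k) • F p) = p.1 :=
        (BM.ker_unit_smul _ _ (Units.ne_zero c)).trans (hFker p)
      have hp : (⟨LinearMap.ker ((c:k) • F p), hcard _ hne⟩ : T) = p := Subtype.ext hker
      refine Prod.ext hp ?_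
      have hspec := Classical.choose_spec (key ⟨(c : k) • F p, hne⟩)
      set c' := Classical.choose (key ⟨(c : k) • F p, hne⟩) with hc'
      rw [show (⟨LinearMap.ker ((c:k) • F p), hcard _ hne⟩ : T) = p from hp] at hspec
      obtain ⟨x, hx⟩ : ∃ x, F p x ≠ 0 := by
        by_contra hcon
        push_neg at hcon
        exact hF0 p (LinearMap.ext fun x => by rw [hcon x]; rfl)
      have h9 := congrArg (fun g : V →ₗ[k] k => g x) hspec
      simp only [LinearMap.smul_apply, smul_eq_mul] at h9
      exact Units.ext (mul_right_cancel₀ hx h9.symm)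
    · rintro ⟨f, hf⟩
      exact Subtype.ext (Classical.choose_spec (key ⟨f, hf⟩)).symm
  haveI : Finite V := Module.finite_of_finite k
  haveI : Finite (V →ₗ[k] k) := Module.finite_of_finite k
  haveI : Fintype (V →ₗ[k] k) := Fintype.ofFinite _
  have hdual : Fintype.card (V →ₗ[k] k) = q ^ n := by
    rw [Module.card_eq_pow_finrank (K := k), Module.finrank_linearMap, Module.finrank_self, hn, mul_one]
  have hcount : Nat.card {f : V →ₗ[k] k // f ≠ 0} = q ^ n - 1 := by
    rw [Nat.card_eq_fintype_card]
    simp only [Ne]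
    rw [Fintype.card_subtype_compl, Fintype.card_subtype_eq, hdual]
  have hprod : Nat.card T * (q - 1) = q ^ n - 1 := by
    rw [← hcount, ← Nat.card_congr e, Nat.card_prod, Nat.card_eq_fintype_card (α := kˣ),
      Fintype.card_units]
  have hgeo := BM.geom_nat q (by omega) n
  exact Nat.eq_of_mul_eq_mul_right (by omega) (hprod.trans hgeo.symm)

theorem BM.list_classify {n : ℕ} (hn : 2 ≤ n) (l : List ℕ) (hs : l.Pairwise (· ≥ ·))
    (hpos : ∀ x ∈ l, 1 ≤ x) (hle : ∀ x ∈ l, x ≤ 2) (hsum : l.sum = n)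
    (huniq : ∀ i i' : Fin l.length, l.get i = 2 → l.get i' = 2 → i = i') :
    l = List.replicate n 1 ∨ l = 2 :: List.replicate (n-2) 1 := by
  cases l with
  | nil => simp at hsum; omega
  | cons a t =>
    have hs' := List.pairwise_cons.mp hs
    by_cases ha : a = 1
    · left
      have hall : ∀ x ∈ a :: t, x = 1 := by
        intro x hx
        rcases List.mem_cons.mp hx with rfl | hx
        · exact ha
        · have h1 := hs'.1 x hx
          have h2 := hpos x (List.mem_cons_of_mem a hx)
          omega
      have hrep : a :: t = List.replicate (a :: t).length 1 :=
        List.eq_replicate_iff.mpr ⟨rfl, hall⟩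
      have hlen : (a :: t).length = n := by
        rw [hrep] at hsum
        simpa using hsum
      rw [hrep, hlen]
    · right
      have ha2 : a = 2 := by
        have h1 := hle a (List.mem_cons_self (a := a) (l := t))
        have h2 := hpos a (List.mem_cons_self (a := a) (l := t))
        omega
      subst ha2
      have hallt : ∀ x ∈ t, x = 1 := by
        intro x hx
        by_cases hx2 : x = 2
        · exfalso
          subst hx2
          obtain ⟨j, hj⟩ := List.mem_iff_get.mp hx
          have hget0 : (2 :: t).get ⟨0, by simp⟩ = 2 := rfl
          have hgets : (2 :: t).get j.succ = t.get j := rfl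
          have := huniq ⟨0, by simp⟩ j.succ hget0 (by rw [hgets, hj])
          have hval := congrArg Fin.val this
          simp [Fin.succ] at hval
        · have h1 := hle x (List.mem_cons_of_mem 2 hx)
          have h2 := hpos x (List.mem_cons_of_mem 2 hx)
          omega
      have hrep : t = List.replicate t.length 1 := List.eq_replicate_iff.mpr ⟨rfl, hallt⟩
      have hlen : t.length = n - 2 := by
        rw [hrep] at hsum
        simp [List.sum_cons] at hsum
        omega
      rw [hrep, hlen]


namespace BirkhoffMod
open Polynomial

section NilpotentAux
variable (k : Type) [Field k]

instance (l : List ℕ) : Module k (NRep k l) := by unfold NRep; infer_instance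
instance (l : List ℕ) : IsScalarTower k (Polynomial k) (NRep k l) := by
  unfold NRep; infer_instance
instance (l : List ℕ) : FiniteDimensional k (NRep k l) := by
  unfold NRep; infer_instance

abbrev PiV (l : List ℕ) : Type := ∀ i : Fin l.length, Fin (l.get i) → k
abbrev phi (l : List ℕ) : PiV k l →ₗ[k] PiV k l :=
  piMapL k (fun i : Fin l.length => shiftL k (l.get i))

def ofN (l : List ℕ) : PiV k l ≃ₗ[k] NRep k l := by
  unfold NRep; exact Module.AEval'.of (phi k l)

lemma X_smul_ofN (l : List ℕ) (v : PiV k l) :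
    (Polynomial.X : Polynomial k) • (ofN k l v) = ofN k l (phi k l v) := by
  unfold NRep ofN
  exact Module.AEval'.X_smul_of _ _

lemma phi_apply (l : List ℕ) (v : PiV k l) (i : Fin l.length) (j : Fin (l.get i)) :
    phi k l v i j =
      if h : 0 < (j : ℕ) then v i ⟨(j : ℕ) - 1, lt_of_le_of_lt (Nat.sub_le _ _) j.isLt⟩
      else 0 := rfl

lemma finrank_NRep (l : List ℕ) : Module.finrank k (NRep k l) = l.sum := by
  rw [← (ofN k l).finrank_eq, Module.finrank_pi_fintype]
  simp [Module.finrank_pi]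

lemma phi_eq_zero_of_ones (l : List ℕ) (h : ∀ x ∈ l, x = 1) (v : PiV k l) :
    phi k l v = 0 := by
  funext i j
  rw [phi_apply]
  have h1 : l.get i = 1 := h _ (l.get_mem i)
  have : (j : ℕ) < 1 := h1 ▸ j.isLt
  rw [dif_neg (by omega)]
  rfl

lemma X_smul_NRep_ones (l : List ℕ) (h : ∀ x ∈ l, x = 1) (w : NRep k l) :
    (Polynomial.X : Polynomial k) • w = 0 := by
  have := X_smul_ofN k l ((ofN k l).symm w)
  rw [(ofN k l).apply_symm_apply, phi_eq_zero_of_ones k l h, map_zero] at this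
  exact this


/-- Characterization of modules isomorphic to `NRep k l'` for `l'` all ones. -/
lemma iso_NRep_ones_iff (l' : List ℕ) (h : ∀ x ∈ l', x = 1)
    (W : Type) [AddCommGroup W] [Module (Polynomial k) W]
    [Module k W] [IsScalarTower k (Polynomial k) W] [FiniteDimensional k W] :
    Nonempty (W ≃ₗ[Polynomial k] NRep k l') ↔
      (∀ w : W, (X : Polynomial k) • w = 0) ∧ Module.finrank k W = l'.length := by
  have hsum : l'.sum = l'.length := by
    conv_lhs => rw [List.eq_replicate_iff.2 ⟨rfl, h⟩]
    rw [List.sum_replicate, smul_eq_mul, mul_one]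
  constructor
  · rintro ⟨e⟩
    refine ⟨fun w => ?_, ?_⟩
    · have := X_smul_NRep_ones k l' h (e w)
      rw [← map_smul] at this
      exact e.injective (by rw [this, map_zero])
    · rw [(e.restrictScalars k).finrank_eq, finrank_NRep, hsum]
  · rintro ⟨h0, hrk⟩
    have : Module.finrank k W = Module.finrank k (NRep k l') := by
      rw [finrank_NRep, hsum, hrk]
    exact ⟨BM.polyEquivOfXZero h0 (X_smul_NRep_ones k l' h) (LinearEquiv.ofFinrankEq _ _ this)⟩



lemma finrank_PiV (l : List ℕ) : Module.finrank k (PiV k l) = l.sum :=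
  ((ofN k l).finrank_eq).trans (finrank_NRep k l)

lemma phi_apply_zero (l : List ℕ) (v : PiV k l) (i : Fin l.length)
    (h : 0 < l.get i) : phi k l v i ⟨0, h⟩ = 0 := rfl

lemma phi_apply_succ (l : List ℕ) (v : PiV k l) (i : Fin l.length) (jj : ℕ)
    (h : jj + 1 < l.get i) :
    phi k l v i ⟨jj + 1, h⟩ = v i ⟨jj, by omega⟩ := by
  rw [phi_apply, dif_pos (Nat.succ_pos jj)]
  congr 1

lemma phi_sq_zero (l : List ℕ) (h2 : ∀ x ∈ l, x ≤ 2) (v : PiV k l) :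
    phi k l (phi k l v) = 0 := by
  funext i j
  show phi k l (phi k l v) i j = 0
  rcases j with ⟨jv, hlt⟩
  rcases jv with _ | jv
  · exact phi_apply_zero k l _ i (by omega)
  · rw [phi_apply_succ k l _ i jv hlt]
    have hle := h2 (l.get i) (l.get_mem i)
    have hjv : jv = 0 := by omega
    subst hjv
    exact phi_apply_zero k l v i (by omega)

lemma parts_le_two (l : List ℕ) (h : ∀ v, phi k l (phi k l v) = 0) :
    ∀ x ∈ l, x ≤ 2 := by
  intro x hx
  by_contra h3
  push_neg at h3
  obtain ⟨i, hi⟩ := List.mem_iff_get.mp hx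
  have hx3 : 3 ≤ l.get i := by omega
  classical
  set v : PiV k l := Pi.single i (Pi.single (⟨0, by omega⟩ : Fin (l.get i)) 1) with hv
  have h5 := congrFun (congrFun (h v) i) ⟨1 + 1, by omega⟩
  rw [phi_apply_succ k l _ i (1) (by omega), phi_apply_succ k l v i 0 (by omega)] at h5
  rw [hv] at h5
  simp only [Pi.single_eq_same, Pi.zero_apply] at h5
  exact one_ne_zero h5


section CaseLemmas
variable [Fintype k]

lemma case_a (n : ℕ) (hn : 1 ≤ n) :
    Nat.card {p : Submodule k (PiV k (List.replicate n 1)) //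
        LinearMap.range (phi k (List.replicate n 1)) ≤ p ∧
        p ≤ LinearMap.ker (phi k (List.replicate n 1)) ∧
        Module.finrank k ↥p = n - 1 ∧
        Module.finrank k (PiV k (List.replicate n 1) ⧸ p) = 1} =
      ∑ i ∈ Finset.range n, Fintype.card k ^ i := by
  set l := List.replicate n 1 with hl
  have hzero : phi k l = 0 :=
    LinearMap.ext fun v => phi_eq_zero_of_ones k l (fun x hx => List.eq_of_mem_replicate hx) v
  have hiff : ∀ p : Submodule k (PiV k l),
      (LinearMap.range (phi k l) ≤ p ∧ p ≤ LinearMap.ker (phi k l) ∧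
        Module.finrank k ↥p = n - 1 ∧ Module.finrank k (PiV k l ⧸ p) = 1) ↔
      (Module.finrank k ↥p = n - 1 ∧ Module.finrank k (PiV k l ⧸ p) = 1) := by
    intro p
    rw [hzero, LinearMap.range_zero, LinearMap.ker_zero]
    simp only [bot_le, le_top, true_and]
  rw [Nat.card_congr (Equiv.subtypeEquivRight hiff)]
  exact BM.card_hyperplanes (by rw [finrank_PiV]; simp [hl]) hn

lemma case_b (n : ℕ) (hn : 2 ≤ n) :
    Nat.card {p : Submodule k (PiV k (2 :: List.replicate (n-2) 1)) //
        LinearMap.range (phi k (2 :: List.replicate (n-2) 1)) ≤ p ∧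
        p ≤ LinearMap.ker (phi k (2 :: List.replicate (n-2) 1)) ∧
        Module.finrank k ↥p = n - 1 ∧
        Module.finrank k (PiV k (2 :: List.replicate (n-2) 1) ⧸ p) = 1} = 1 := by
  classical
  set l := 2 :: List.replicate (n-2) 1 with hl
  have hlen : l.length = n - 1 := by simp [hl]; omega
  set i₀ : Fin l.length := ⟨0, by simp [hl]⟩ with hi₀
  have hget0 : l.get i₀ = 2 := rfl
  have hgets : ∀ i : Fin l.length, 0 < (i:ℕ) → l.get i = 1 := by
    rintro ⟨iv, hvlt⟩ hipos
    rcases iv with _ | iv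
    · simp at hipos
    · simp [hl, List.get_eq_getElem]
  set j₀ : Fin (l.get i₀) := ⟨0, by rw [hget0]; omega⟩ with hj₀
  set ev : PiV k l →ₗ[k] k :=
    (LinearMap.proj (R := k) (φ := fun _ : Fin (l.get i₀) => k) j₀).comp
      (LinearMap.proj (R := k) (φ := fun i : Fin l.length => Fin (l.get i) → k) i₀) with hev
  have hev_apply : ∀ v : PiV k l, ev v = v i₀ j₀ := fun v => rfl
  have hkerphi : LinearMap.ker (phi k l) = LinearMap.ker ev := by
    ext v
    simp only [LinearMap.mem_ker, hev_apply]
    constructor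
    · intro hv
      have h5 := congrFun (congrFun hv i₀) ⟨0 + 1, by rw [hget0]; omega⟩
      rw [phi_apply_succ k l v i₀ 0 (by rw [hget0]; omega)] at h5
      rw [show v i₀ j₀ = v i₀ ⟨0, by rw [hget0]; omega⟩ from rfl]
      rw [show ((0 : PiV k l) i₀ ⟨0+1, by rw [hget0]; omega⟩) = 0 from rfl] at h5
      convert h5 using 2
    · intro hv
      funext i j
      show phi k l v i j = 0
      rcases j with ⟨jv, hjlt⟩
      rcases jv with _ | jv
      · exact phi_apply_zero k l v i (by omega)
      · rw [phi_apply_succ k l v i jv hjlt]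
        have hi0 : (i : ℕ) = 0 := by
          by_contra hc
          have := hgets i (by omega)
          omega
        obtain rfl : i₀ = i := Fin.ext (by simp [hi₀, hi0])
        have hjv : jv = 0 := by
          have := hjlt
          rw [hget0] at this
          omega
        subst hjv
        exact hv
  have hev_ne : ev ≠ 0 := by
    intro hz
    have h6 := congrArg (fun g : PiV k l →ₗ[k] k => g (Pi.single i₀ (Pi.single j₀ (1:k)))) hz
    simp only [hev_apply, LinearMap.zero_apply, Pi.single_eq_same] at h6
    exact one_ne_zero h6
  have hfr : Module.finrank k (PiV k l) = n := by
    rw [finrank_PiV, hl]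
    simp [List.sum_cons, List.sum_replicate]
    omega
  obtain ⟨hk1, hk2⟩ := BM.functional_facts ev hev_ne
  rw [hfr] at hk1
  have hrange : LinearMap.range (phi k l) ≤ LinearMap.ker (phi k l) := by
    rintro x ⟨u, rfl⟩
    refine LinearMap.mem_ker.mpr (phi_sq_zero k l ?_ u)
    intro x hx
    rw [hl] at hx
    rcases List.mem_cons.mp hx with rfl | hx
    · exact le_refl 2
    · rw [List.eq_of_mem_replicate hx]
      omega
  have hcond : ∀ p : Submodule k (PiV k l),
      (LinearMap.range (phi k l) ≤ p ∧ p ≤ LinearMap.ker (phi k l) ∧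
        Module.finrank k ↥p = n - 1 ∧ Module.finrank k (PiV k l ⧸ p) = 1) ↔
      p = LinearMap.ker (phi k l) := by
    intro p
    constructor
    · rintro ⟨h1, h2, h3, h4⟩
      refine Submodule.eq_of_le_of_finrank_eq h2 ?_
      rw [h3, hkerphi, hk1]
    · rintro rfl
      exact ⟨hrange, le_rfl, by rw [hkerphi]; exact hk1, by rw [hkerphi]; exact hk2⟩
  rw [Nat.card_congr (Equiv.subtypeEquivRight hcond)]
  haveI : Unique {p : Submodule k (PiV k l) // p = LinearMap.ker (phi k l)} :=
    ⟨⟨⟨_, rfl⟩⟩, by rintro ⟨p, rfl⟩; rfl⟩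
  exact Nat.card_unique

lemma case_c (n : ℕ) (hn : 2 ≤ n) (l : List ℕ) (hs : l.Pairwise (· ≥ ·))
    (hpos : ∀ x ∈ l, 1 ≤ x) (hA : l ≠ List.replicate n 1)
    (hB : l ≠ 2 :: List.replicate (n-2) 1) :
    Nat.card {p : Submodule k (PiV k l) //
        LinearMap.range (phi k l) ≤ p ∧
        p ≤ LinearMap.ker (phi k l) ∧
        Module.finrank k ↥p = n - 1 ∧
        Module.finrank k (PiV k l ⧸ p) = 1} = 0 := by
  classical
  haveI : IsEmpty {p : Submodule k (PiV k l) //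
      LinearMap.range (phi k l) ≤ p ∧
      p ≤ LinearMap.ker (phi k l) ∧
      Module.finrank k ↥p = n - 1 ∧
      Module.finrank k (PiV k l ⧸ p) = 1} := by
    refine ⟨?_⟩
    rintro ⟨p, h1, h2, h3, h4⟩
    have hfr := Submodule.finrank_quotient_add_finrank p
    rw [h3, h4, finrank_PiV] at hfr
    have hsum : l.sum = n := by omega
    have hle2 : ∀ x ∈ l, x ≤ 2 := parts_le_two k l
      (fun v => LinearMap.mem_ker.mp (h2 (h1 (LinearMap.mem_range_self _ v))))
    have huniq : ∀ i i' : Fin l.length, l.get i = 2 → l.get i' = 2 → i = i' := by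
      intro i i' hi hi'
      by_contra hne
      have hrn := LinearMap.finrank_range_add_finrank_ker (phi k l)
      rw [finrank_PiV, hsum] at hrn
      have hkle : n - 1 ≤ Module.finrank k (LinearMap.ker (phi k l)) :=
        h3 ▸ Submodule.finrank_mono h2
      have hr1 : Module.finrank k (LinearMap.range (phi k l)) ≤ 1 := by omega
      obtain ⟨v₀, hv₀⟩ := finrank_le_one_iff.mp hr1
      set u₁ : PiV k l := Pi.single i (Pi.single (⟨0, by omega⟩ : Fin (l.get i)) 1) with hu₁
      set u₂ : PiV k l := Pi.single i' (Pi.single (⟨0, by omega⟩ : Fin (l.get i')) 1) with hu₂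
      obtain ⟨c₁, hc₁⟩ := hv₀ ⟨phi k l u₁, LinearMap.mem_range_self _ _⟩
      obtain ⟨c₂, hc₂⟩ := hv₀ ⟨phi k l u₂, LinearMap.mem_range_self _ _⟩
      have hlt1 : (0:ℕ)+1 < l.get i := by omega
      have hlt2 : (0:ℕ)+1 < l.get i' := by omega
      have e11 : phi k l u₁ i ⟨0+1, hlt1⟩ = 1 := by
        rw [phi_apply_succ k l u₁ i 0 hlt1, hu₁]
        simp only [Pi.single_eq_same]
      have e12 : phi k l u₁ i' ⟨0+1, hlt2⟩ = 0 := by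
        rw [phi_apply_succ k l u₁ i' 0 hlt2, hu₁]
        rw [Pi.single_eq_of_ne (Ne.symm hne)]
        rfl
      have e21 : phi k l u₂ i ⟨0+1, hlt1⟩ = 0 := by
        rw [phi_apply_succ k l u₂ i 0 hlt1, hu₂]
        rw [Pi.single_eq_of_ne hne]
        rfl
      have e22 : phi k l u₂ i' ⟨0+1, hlt2⟩ = 1 := by
        rw [phi_apply_succ k l u₂ i' 0 hlt2, hu₂]
        simp only [Pi.single_eq_same]
      have hcoe₁ : c₁ • (v₀ : PiV k l) = phi k l u₁ := by
        rw [← Submodule.coe_smul, hc₁]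
      have hcoe₂ : c₂ • (v₀ : PiV k l) = phi k l u₂ := by
        rw [← Submodule.coe_smul, hc₂]
      set α := (v₀ : PiV k l) i ⟨0+1, hlt1⟩ with hα
      set β := (v₀ : PiV k l) i' ⟨0+1, hlt2⟩ with hβ
      have f11 : c₁ * α = 1 := by
        have := congrFun (congrFun hcoe₁ i) ⟨0+1, hlt1⟩
        simp only [Pi.smul_apply, smul_eq_mul] at this
        rw [e11] at this
        exact this
      have f21 : c₂ * α = 0 := by
        have := congrFun (congrFun hcoe₂ i) ⟨0+1, hlt1⟩
        simp only [Pi.smul_apply, smul_eq_mul] at this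
        rw [e21] at this
        exact this
      have f22 : c₂ * β = 1 := by
        have := congrFun (congrFun hcoe₂ i') ⟨0+1, hlt2⟩
        simp only [Pi.smul_apply, smul_eq_mul] at this
        rw [e22] at this
        exact this
      have hαne : α ≠ 0 := by
        intro hz
        rw [hz, mul_zero] at f11
        exact one_ne_zero f11.symm
      have hc2z : c₂ = 0 := by
        rcases mul_eq_zero.mp f21 with h | h
        · exact h
        · exact absurd h hαne
      rw [hc2z, zero_mul] at f22
      exact one_ne_zero f22.symm
    rcases BM.list_classify hn l hs hpos hle2 hsum huniq with h | h
    · exact hA h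
    · exact hB h
  exact Nat.card_of_isEmpty

end CaseLemmas
end NilpotentAux

variable (k : Type) [Field k]

set_option maxHeartbeats 2000000 in
/-- the bridge -/
lemma hall_eq (n : ℕ) (l : List ℕ) :
    hallPair (Polynomial k) (NRep k (List.replicate (n-1) 1)) (NRep k [1]) (NRep k l)
    = Nat.card {p : Submodule k (PiV k l) //
        LinearMap.range (phi k l) ≤ p ∧ p ≤ LinearMap.ker (phi k l) ∧
        Module.finrank k ↥p = n - 1 ∧ Module.finrank k (PiV k l ⧸ p) = 1} := by
  classical
  set V := PiV k l
  set φ := phi k l with hφ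
  set a : Module.End k V := φ with ha
  have hlsmul : Algebra.lsmul k k V a = φ := rfl
  rw [hallPair]
  apply Nat.card_congr
  apply Equiv.symm
  -- first: conditions imply invariance
  have hinv : ∀ p : Submodule k V,
      (LinearMap.range φ ≤ p ∧ p ≤ LinearMap.ker φ ∧
        Module.finrank k ↥p = n - 1 ∧ Module.finrank k (V ⧸ p) = 1) →
      p ∈ (Algebra.lsmul k k V a).invtSubmodule := by
    intro p hp
    rw [Module.End.mem_invtSubmodule]
    intro v hv
    simp only [Submodule.mem_comap, hlsmul]
    have : φ v = 0 := hp.2.1 hv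
    rw [this]
    exact p.zero_mem
  refine Equiv.trans
    (⟨fun p => ⟨⟨p.1, hinv p.1 p.2⟩, p.2⟩, fun pp => ⟨pp.1.1, pp.2⟩,
      fun p => rfl, fun pp => rfl⟩ :
      {p : Submodule k V // LinearMap.range φ ≤ p ∧ p ≤ LinearMap.ker φ ∧
        Module.finrank k ↥p = n - 1 ∧ Module.finrank k (V ⧸ p) = 1} ≃
      {pp : (Algebra.lsmul k k V a).invtSubmodule //
        LinearMap.range φ ≤ (pp : Submodule k V) ∧ (pp : Submodule k V) ≤ LinearMap.ker φ ∧
        Module.finrank k (pp : Submodule k V) = n - 1 ∧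
        Module.finrank k (V ⧸ (pp : Submodule k V)) = 1}) ?_
  refine Equiv.subtypeEquiv (Module.AEval.mapSubmodule k V a).toEquiv fun pp => ?_
  set p : Submodule k V := pp.1 with hpdef
  set U : Submodule (Polynomial k) (Module.AEval k V a) :=
    Module.AEval.mapSubmodule k V a pp with hU
  -- k-linear equiv between p and U
  have eU : ↥p ≃ₗ[k] ↥U := Module.AEval.equiv_mapSubmodule a p pp.2
  haveI : FiniteDimensional k ↥U := Module.Finite.equiv eU
  -- quotient equiv
  have hmapU : Submodule.map ((Module.AEval.of k V a : V ≃ₗ[k] Module.AEval k V a) :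
      V →ₗ[k] Module.AEval k V a) p = U.restrictScalars k := by
    ext y
    simp only [Submodule.mem_map, Submodule.restrictScalars_mem]
    constructor
    · rintro ⟨v, hv, rfl⟩
      rw [hU, Module.AEval.mem_mapSubmodule_apply]
      simpa using hv
    · intro hy
      exact ⟨(Module.AEval.of k V a).symm y, by
        rw [hU, Module.AEval.mem_mapSubmodule_apply] at hy; exact hy, by simp⟩
  have eQ : (V ⧸ p) ≃ₗ[k] ((Module.AEval k V a) ⧸ U) :=
    (Submodule.Quotient.equiv p (U.restrictScalars k) (Module.AEval.of k V a) hmapU).trans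
      (Submodule.Quotient.restrictScalarsEquiv k U)
  haveI : FiniteDimensional k ((Module.AEval k V a) ⧸ U) := Module.Finite.equiv eQ
  -- X acts on U-elements
  have hXU : (∀ u : ↥U, (X : Polynomial k) • u = 0) ↔ p ≤ LinearMap.ker φ := by
    constructor
    · intro h v hv
      have pf : Module.AEval'.of φ v ∈ U := by
        rw [hU, Module.AEval.mem_mapSubmodule_apply]; exact hv
      have h2 := congrArg (Subtype.val) (h ⟨Module.AEval'.of φ v, pf⟩)
      rw [Submodule.coe_smul, Submodule.coe_zero, Module.AEval'.X_smul_of] at h2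
      rw [LinearMap.mem_ker]
      exact (Module.AEval'.of φ).injective (by rw [h2, map_zero])
    · intro h u
      apply Subtype.ext
      rw [Submodule.coe_smul, Submodule.coe_zero]
      obtain ⟨y, hy⟩ := u
      have hv : (Module.AEval'.of φ).symm y ∈ p := by
        rwa [hU, Module.AEval.mem_mapSubmodule_apply] at hy
      have h5 : (Module.AEval'.of φ).symm ((X : Polynomial k) • y) = 0 := by
        rw [Module.AEval'.of_symm_X_smul]
        exact LinearMap.mem_ker.mp (h hv)
      have h7 := congrArg (Module.AEval'.of φ) h5
      rwa [LinearEquiv.apply_symm_apply, map_zero] at h7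
  -- X acts on quotient
  have hXQ : (∀ w : (Module.AEval k V a) ⧸ U, (X : Polynomial k) • w = 0) ↔
      LinearMap.range φ ≤ p := by
    constructor
    · intro h v
      rintro ⟨x, rfl⟩
      have h2 := h (Submodule.Quotient.mk (Module.AEval'.of φ x))
      rw [← Submodule.Quotient.mk_smul, Submodule.Quotient.mk_eq_zero,
        Module.AEval'.X_smul_of, hU, Module.AEval.mem_mapSubmodule_apply] at h2
      exact h2
    · intro h w
      obtain ⟨y, rfl⟩ := Submodule.Quotient.mk_surjective U w
      rw [← Submodule.Quotient.mk_smul, Submodule.Quotient.mk_eq_zero]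
      have h6 : (X : Polynomial k) • y =
          Module.AEval'.of φ (φ ((Module.AEval'.of φ).symm y)) := by
        rw [← Module.AEval'.X_smul_of]; simp
      rw [h6, hU, Module.AEval.mem_mapSubmodule_apply]
      exact h (LinearMap.mem_range_self φ ((Module.AEval'.of φ).symm y))
  have key1 : Nonempty (↥U ≃ₗ[Polynomial k] NRep k (List.replicate (n-1) 1)) ↔
      (p ≤ LinearMap.ker φ ∧ Module.finrank k ↥p = n - 1) := by
    rw [iso_NRep_ones_iff k (List.replicate (n-1) 1) (by simp) ↥U, hXU,
      ← eU.finrank_eq, List.length_replicate]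
  have key2 : Nonempty (((Module.AEval k V a) ⧸ U) ≃ₗ[Polynomial k] NRep k [1]) ↔
      (LinearMap.range φ ≤ p ∧ Module.finrank k (V ⧸ p) = 1) := by
    rw [iso_NRep_ones_iff k [1] (by simp) _, hXQ, ← eQ.finrank_eq]
    simp
  exact ⟨fun ⟨h1,h2,h3,h4⟩ => ⟨key1.mpr ⟨h2,h3⟩, key2.mpr ⟨h1,h4⟩⟩,
    fun ⟨h1,h2⟩ => ⟨(key2.mp h2).1, (key1.mp h1).1, (key1.mp h1).2, (key2.mp h2).2⟩⟩


end BirkhoffMod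

/-- Lemma 4.4: for `n ≥ 2` and a finite field `k` with `q` elements, the number of
`k[x]`-submodules `U ⊆ N_λ(k)` with `U ≅ N_{(1^{n-1})}(k)` and `N_λ(k)/U ≅ N_{(1)}(k)`
is `(qⁿ-1)/(q-1) = 1 + q + … + q^{n-1}` if `λ = (1ⁿ)`, is `1` if `λ = (2,1^{n-2})`,
and is `0` otherwise. -/
theorem hall_number_one_column (n : ℕ) (hn : 2 ≤ n) (k : Type) [Field k] [Fintype k]
    (l : List ℕ) (hl : l.Pairwise (· ≥ ·)) (hpos : ∀ x ∈ l, 1 ≤ x) :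
    BirkhoffMod.hallPair (Polynomial k)
        (BirkhoffMod.NRep k (List.replicate (n - 1) 1))
        (BirkhoffMod.NRep k [1])
        (BirkhoffMod.NRep k l) =
      if l = List.replicate n 1 then ∑ i ∈ Finset.range n, Fintype.card k ^ i
      else if l = 2 :: List.replicate (n - 2) 1 then 1
      else 0 := by
  classical
  rw [BirkhoffMod.hall_eq k n l]
  by_cases hA : l = List.replicate n 1
  · subst hA
    rw [if_pos rfl]
    exact BirkhoffMod.case_a k n (by omega)
  · rw [if_neg hA]
    by_cases hB : l = 2 :: List.replicate (n - 2) 1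
    · subst hB
      rw [if_pos rfl]
      exact BirkhoffMod.case_b k n hn
    · rw [if_neg hB]
      exact BirkhoffMod.case_c k n hn l hl hpos hA hB
end
end
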